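/- Let T be the terms over *, ∘ and variable x, and let Cc : T → G be defined inductively into a group G equipped with elements S, A and an endomorphism sh₁ by: Cc(x) = 1, Cc(t₁ * t₂) = Cc(t₁)·sh₁(Cc(t₂))·S·sh₁(Cc(t₁))⁻¹, Cc(t₁ ∘ t₂) = Cc(t₁)·sh₁(Cc(t₂))·A. Suppose G is the free group on {S_α, A_α : α ∈ {0,1}*} with S = S_ε, A = A_ε and sh₁ the endomorphism sending S_α ↦ S_{1α}, A_α ↦ A_{1α}. Then Cc is injective: distinct terms have distinct images. -/

import Mathlib

/-- Terms over binary symbols `*`, `∘` and the single variable `x`. -/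
inductive Tm18 : Type
  | x : Tm18
  | star : Tm18 → Tm18 → Tm18
  | circ : Tm18 → Tm18 → Tm18

/-- The free group on the generators `S_α` (encoded `(false, α)`) and `A_α`
(encoded `(true, α)`) for binary addresses `α`. -/
abbrev G18 := FreeGroup (Bool × List Bool)

/-- The shift endomorphism `sh₁`, sending `S_α ↦ S_{1α}` and `A_α ↦ A_{1α}`. -/
def sh18 : G18 →* G18 := FreeGroup.map (fun p => (p.1, true :: p.2))

/-- `S = S_ε`. -/
def S18 : G18 := FreeGroup.of (false, [])

/-- `A = A_ε`. -/
def A18 : G18 := FreeGroup.of (true, [])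

/-- The blueprint map `Cc` into the free group. -/
def Cc18 : Tm18 → G18
  | .x => 1
  | .star a b => Cc18 a * sh18 (Cc18 b) * S18 * (sh18 (Cc18 a))⁻¹
  | .circ a b => Cc18 a * sh18 (Cc18 b) * A18

namespace Hlp18

abbrev α18 := Bool × List Bool

/-- non-cancelling adjacent pair -/
def NR (a b : α18 × Bool) : Prop := ¬(a.1 = b.1 ∧ a.2 = !b.2)

def Chn (w : List (α18 × Bool)) : Prop := List.Chain' NR w

theorem reduce_eq_self_of_chn : ∀ {w : List (α18 × Bool)}, Chn w → FreeGroup.reduce w = w := by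
  intro w
  induction w with
  | nil => intro _; rfl
  | cons a l ih =>
    intro h
    have hl : FreeGroup.reduce l = l := ih (List.IsChain.tail h)
    rw [FreeGroup.reduce.cons, hl]
    cases l with
    | nil => rfl
    | cons b t =>
      have hnr : NR a b := (List.isChain_cons_cons.mp h).1
      show (if a.1 = b.1 ∧ a.2 = !b.2 then t else a :: b :: t) = a :: b :: t
      rw [if_neg hnr]

theorem chn_of_reduce_eq_self : ∀ {w : List (α18 × Bool)}, FreeGroup.reduce w = w → Chn w := by
  intro w
  induction w with
  | nil => intro _; exact List.isChain_nil
  | cons a l ih =>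
    intro h
    rw [FreeGroup.reduce.cons] at h
    rcases hl : FreeGroup.reduce l with _ | ⟨b, t⟩
    · rw [hl] at h
      have h2 : [a] = a :: l := h
      have h3 : l = [] := by
        have := congrArg List.tail h2
        simpa using this.symm
      subst h3
      exact List.isChain_singleton a
    · rw [hl] at h
      by_cases hg : a.1 = b.1 ∧ a.2 = !b.2
      · exfalso
        have h' : t = a :: l := by
          have : (if a.1 = b.1 ∧ a.2 = !b.2 then t else a :: b :: t) = a :: l := h
          rwa [if_pos hg] at this
        have hs : (FreeGroup.reduce l).Sublist l := FreeGroup.Red.sublist FreeGroup.reduce.red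
        rw [hl] at hs
        have := hs.length_le
        rw [h'] at this
        simp at this
      · have h' : a :: b :: t = a :: l := by
          have h2 : (if a.1 = b.1 ∧ a.2 = !b.2 then t else a :: b :: t) = a :: l := h
          rwa [if_neg hg] at h2
        have hlt : b :: t = l := by injection h'
        subst hlt
        exact List.isChain_cons_cons.mpr ⟨hg, ih hl⟩

theorem chn_toWord (x : G18) : Chn x.toWord :=
  chn_of_reduce_eq_self (FreeGroup.reduce_toWord x)

theorem toWord_mul_eq (x y : G18)
    (h : ∀ a ∈ x.toWord.getLast?, ∀ b ∈ y.toWord.head?, NR a b) :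
    (x * y).toWord = x.toWord ++ y.toWord := by
  conv_lhs => rw [← FreeGroup.mk_toWord (x := x), ← FreeGroup.mk_toWord (x := y)]
  rw [FreeGroup.mul_mk, FreeGroup.toWord_mk]
  exact reduce_eq_self_of_chn (List.isChain_append.mpr ⟨chn_toWord x, chn_toWord y, h⟩)

theorem toWord_sh (x : G18) :
    (sh18 x).toWord = x.toWord.map (fun l => ((l.1.1, true :: l.1.2), l.2)) := by
  have h1 : sh18 x = FreeGroup.mk (x.toWord.map (fun l => ((l.1.1, true :: l.1.2), l.2))) := by
    conv_lhs => rw [← FreeGroup.mk_toWord (x := x)]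
    rw [show sh18 = FreeGroup.map (fun p : α18 => (p.1, true :: p.2)) from rfl]
    rw [FreeGroup.map.mk]
  rw [h1, FreeGroup.toWord_mk]
  apply reduce_eq_self_of_chn
  apply List.isChain_map_of_isChain _ _ (chn_toWord x)
  rintro ⟨⟨a1, a2⟩, a3⟩ ⟨⟨b1, b2⟩, b3⟩ hab hc
  apply hab
  simp only [Prod.mk.injEq, List.cons.injEq, true_and] at hc
  exact ⟨by simp [hc.1.1, hc.1.2], hc.2⟩

def unsh : G18 →* G18 := FreeGroup.map (fun p => (p.1, p.2.tail))

theorem unsh_sh (x : G18) : unsh (sh18 x) = x := by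
  have h : unsh.comp sh18 = MonoidHom.id G18 := by
    apply FreeGroup.ext_hom
    intro a
    show unsh (sh18 (FreeGroup.of a)) = FreeGroup.of a
    rw [show sh18 = FreeGroup.map (fun p : α18 => (p.1, true :: p.2)) from rfl,
      show unsh = FreeGroup.map (fun p : α18 => (p.1, p.2.tail)) from rfl]
    rw [FreeGroup.map.of, FreeGroup.map.of]
    rfl
  have := congrFun (congrArg (fun f : G18 →* G18 => (f : G18 → G18)) h) x
  simpa using this

theorem sh_inj : Function.Injective sh18 := fun a b h => by
  rw [← unsh_sh a, h, unsh_sh]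

/-- all level-0 letters in the reduced word are positive -/
def OK0 (g : G18) : Prop := ∀ l ∈ g.toWord, l.1.2 = ([] : List Bool) → l.2 = true

theorem ok0_one : OK0 1 := by
  intro l hl
  rw [FreeGroup.toWord_one] at hl
  cases hl

theorem ok0_mul {x y : G18} (hx : OK0 x) (hy : OK0 y) : OK0 (x * y) := by
  intro l hl h0
  have := (FreeGroup.toWord_mul_sublist x y).subset hl
  rcases List.mem_append.mp this with h | h
  · exact hx l h h0
  · exact hy l h h0

theorem sh_letters (r : G18) : ∀ l ∈ (sh18 r).toWord, l.1.2 ≠ ([] : List Bool) := by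
  rw [toWord_sh]
  intro l hl
  rcases List.mem_map.mp hl with ⟨a, _, rfl⟩
  simp

theorem ok0_sh (z : G18) : OK0 (sh18 z) := by
  intro l hl h0
  exact absurd h0 (sh_letters z l hl)

theorem ok0_of (p : α18) : OK0 (FreeGroup.of p) := by
  intro l hl _
  rw [FreeGroup.toWord_of] at hl
  simp only [List.mem_singleton] at hl
  subst hl
  rfl

theorem ok0_Cc : ∀ t : Tm18, OK0 (Cc18 t) := by
  intro t
  induction t with
  | x => exact ok0_one
  | star a b iha ihb =>
    show OK0 (Cc18 a * sh18 (Cc18 b) * S18 * (sh18 (Cc18 a))⁻¹)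
    rw [← map_inv sh18]
    exact ok0_mul (ok0_mul (ok0_mul iha (ok0_sh _)) (ok0_of _)) (ok0_sh _)
  | circ a b iha ihb =>
    exact ok0_mul (ok0_mul iha (ok0_sh _)) (ok0_of _)

/-- the reduced word is empty or ends with a positive level-0 letter -/
def EndsZ (g : G18) : Prop :=
  g.toWord = [] ∨ ∃ c : Bool, g.toWord.getLast? = some ((c, []), true)

theorem endsZ_one : EndsZ 1 := Or.inl FreeGroup.toWord_one

theorem toWord_mul_of0 (m : G18) (hm : OK0 m) (c : Bool) :
    (m * FreeGroup.of (c, [])).toWord = m.toWord ++ [((c, ([] : List Bool)), true)] := by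
  have h := toWord_mul_eq m (FreeGroup.of (c, [])) ?_
  · rw [h, FreeGroup.toWord_of]
  · intro a ha b hb
    rw [FreeGroup.toWord_of] at hb
    simp only [List.head?_cons, Option.mem_some_iff] at hb
    subst hb
    intro hc
    obtain ⟨h1, h2⟩ := hc
    obtain ⟨hne, ha'⟩ := List.mem_getLast?_eq_getLast ha
    have hmem : a ∈ m.toWord := ha' ▸ List.getLast_mem hne
    have := hm a hmem (by rw [h1])
    rw [this] at h2
    simp at h2

theorem toWord_mul_sh (p r : G18) (hp : EndsZ p) :
    (p * sh18 r).toWord = p.toWord ++ (sh18 r).toWord := by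
  apply toWord_mul_eq
  intro a ha b hb
  rcases hp with hp | ⟨c, hc⟩
  · rw [hp] at ha; cases ha
  · rw [hc] at ha
    simp only [Option.mem_some_iff] at ha
    subst ha
    have hbmem : b ∈ (sh18 r).toWord := by
      rcases hw : (sh18 r).toWord with _ | ⟨b0, t⟩
      · rw [hw] at hb; cases hb
      · rw [hw] at hb
        simp only [List.head?_cons, Option.mem_some_iff] at hb
        subst hb
        exact List.mem_cons_self
    intro hcon
    obtain ⟨h1, _⟩ := hcon
    have := sh_letters r b hbmem
    apply this
    rw [← congrArg Prod.snd h1]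

theorem split {p p' r r' : G18} (hp : EndsZ p) (hp' : EndsZ p')
    (h : p * sh18 r = p' * sh18 r') : p = p' ∧ r = r' := by
  have hw := congrArg FreeGroup.toWord h
  rw [toWord_mul_sh p r hp, toWord_mul_sh p' r' hp'] at hw
  have key : p.toWord = p'.toWord := by
    have aux : ∀ (q q' : G18) (s s' : G18), EndsZ q' →
        q.toWord ++ (sh18 s).toWord = q'.toWord ++ (sh18 s').toWord →
        (∃ w, q'.toWord = q.toWord ++ w ∧ (sh18 s).toWord = w ++ (sh18 s').toWord) →
        q.toWord = q'.toWord := by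
      intro q q' s s' hq' _ ⟨w, hw1, hw2⟩
      rcases w with _ | ⟨a, w'⟩
      · rw [hw1]; simp
      · exfalso
        rcases hq' with hq' | ⟨c, hc⟩
        · rw [hq'] at hw1
          exact absurd hw1.symm (by simp)
        · rw [hw1] at hc
          rw [List.getLast?_append_of_ne_nil _ (by simp)] at hc
          obtain ⟨hne, hlast⟩ := List.mem_getLast?_eq_getLast (by rw [hc]; rfl :
            ((c, ([] : List Bool)), true) ∈ (a :: w').getLast?)
          have hmem : ((c, ([] : List Bool)), true) ∈ (a :: w') := hlast ▸ List.getLast_mem hne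
          have hmem2 : ((c, ([] : List Bool)), true) ∈ (sh18 s).toWord := by
            rw [hw2]; exact List.mem_append.mpr (Or.inl hmem)
          exact sh_letters s _ hmem2 rfl
    rcases List.append_eq_append_iff.mp hw with ⟨w, hw1, hw2⟩ | ⟨w, hw1, hw2⟩
    · exact aux p p' r r' hp' hw ⟨w, hw1, hw2⟩
    · exact (aux p' p r' r hp hw.symm ⟨w, hw1, hw2⟩).symm
  have hpp : p = p' := FreeGroup.toWord_injective key
  subst hpp
  exact ⟨rfl, sh_inj (mul_left_cancel h)⟩

def sz : Tm18 → ℕ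
  | .x => 1
  | .star a b => sz a + sz b + 1
  | .circ a b => sz a + sz b + 1

theorem sz_pos : ∀ t : Tm18, 1 ≤ sz t := by
  intro t; cases t <;> simp [sz]

theorem toWord_node (a b : Tm18) (c : Bool) :
    (Cc18 a * sh18 (Cc18 b) * FreeGroup.of (c, [])).toWord =
      (Cc18 a * sh18 (Cc18 b)).toWord ++ [((c, ([] : List Bool)), true)] :=
  toWord_mul_of0 _ (ok0_mul (ok0_Cc a) (ok0_sh _)) c

theorem endsZ_node (a b : Tm18) (c : Bool) :
    EndsZ (Cc18 a * sh18 (Cc18 b) * FreeGroup.of (c, [])) := by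
  right
  exact ⟨c, by rw [toWord_node, List.getLast?_concat]⟩

theorem node_ne_one (a b : Tm18) (c : Bool) :
    Cc18 a * sh18 (Cc18 b) * FreeGroup.of (c, []) ≠ 1 := by
  intro h
  have := congrArg FreeGroup.toWord h
  rw [toWord_node, FreeGroup.toWord_one] at this
  exact absurd this (by simp)

theorem node_ne_node (a b a' b' : Tm18) :
    Cc18 a * sh18 (Cc18 b) * FreeGroup.of (false, []) ≠
      Cc18 a' * sh18 (Cc18 b') * FreeGroup.of (true, []) := by
  intro h
  have hw := congrArg FreeGroup.toWord h
  rw [toWord_node, toWord_node] at hw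
  have h1 := congrArg List.getLast? hw
  rw [List.getLast?_concat, List.getLast?_concat] at h1
  simp at h1

theorem Cc_star_mul_sh (a b : Tm18) (g : G18) :
    Cc18 (.star a b) * sh18 g =
      (Cc18 a * sh18 (Cc18 b) * FreeGroup.of (false, [])) * sh18 ((Cc18 a)⁻¹ * g) := by
  show Cc18 a * sh18 (Cc18 b) * S18 * (sh18 (Cc18 a))⁻¹ * sh18 g = _
  rw [map_mul, map_inv]
  show _ = Cc18 a * sh18 (Cc18 b) * S18 * ((sh18 (Cc18 a))⁻¹ * sh18 g)
  group

theorem Cc_circ_mul_sh (a b : Tm18) (g : G18) :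
    Cc18 (.circ a b) * sh18 g =
      (Cc18 a * sh18 (Cc18 b) * FreeGroup.of (true, [])) * sh18 g := rfl

theorem Cc_x_mul_sh (g : G18) : Cc18 .x * sh18 g = 1 * sh18 g := rfl

theorem master : ∀ (n : ℕ) (a a' : Tm18) (g g' : G18), sz a + sz a' ≤ n →
    Cc18 a * sh18 g = Cc18 a' * sh18 g' → a = a' ∧ g = g' := by
  intro n
  induction n with
  | zero =>
    intro a a' g g' hle _
    have := sz_pos a; have := sz_pos a'
    omega
  | succ n ih =>
    intro a a' g g' hle heq
    cases a with
    | x =>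
      cases a' with
      | x =>
        rw [Cc_x_mul_sh, Cc_x_mul_sh, one_mul, one_mul] at heq
        exact ⟨rfl, sh_inj heq⟩
      | star c' d' =>
        rw [Cc_x_mul_sh, Cc_star_mul_sh] at heq
        obtain ⟨h1, _⟩ := split endsZ_one (endsZ_node c' d' false) heq
        exact absurd h1.symm (node_ne_one c' d' false)
      | circ c' d' =>
        rw [Cc_x_mul_sh, Cc_circ_mul_sh] at heq
        obtain ⟨h1, _⟩ := split endsZ_one (endsZ_node c' d' true) heq
        exact absurd h1.symm (node_ne_one c' d' true)
    | star c d =>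
      cases a' with
      | x =>
        rw [Cc_x_mul_sh, Cc_star_mul_sh] at heq
        obtain ⟨h1, _⟩ := split (endsZ_node c d false) endsZ_one heq
        exact absurd h1 (node_ne_one c d false)
      | star c' d' =>
        rw [Cc_star_mul_sh, Cc_star_mul_sh] at heq
        obtain ⟨h1, h2⟩ := split (endsZ_node c d false) (endsZ_node c' d' false) heq
        have h3 : Cc18 c * sh18 (Cc18 d) = Cc18 c' * sh18 (Cc18 d') :=
          mul_right_cancel h1
        have hszc := sz_pos d; have hszc' := sz_pos d'
        obtain ⟨hc, hd⟩ := ih c c' (Cc18 d) (Cc18 d') (by simp [sz] at hle; omega) h3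
        have hd2 : d = d' := by
          refine (ih d d' 1 1 (by simp [sz] at hle; omega) ?_).1
          rw [hd]
        subst hc; subst hd2
        exact ⟨rfl, mul_left_cancel h2⟩
      | circ c' d' =>
        rw [Cc_star_mul_sh, Cc_circ_mul_sh] at heq
        obtain ⟨h1, _⟩ := split (endsZ_node c d false) (endsZ_node c' d' true) heq
        exact absurd h1 (node_ne_node c d c' d')
    | circ c d =>
      cases a' with
      | x =>
        rw [Cc_x_mul_sh, Cc_circ_mul_sh] at heq
        obtain ⟨h1, _⟩ := split (endsZ_node c d true) endsZ_one heq
        exact absurd h1 (node_ne_one c d true)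
      | star c' d' =>
        rw [Cc_star_mul_sh, Cc_circ_mul_sh] at heq
        obtain ⟨h1, _⟩ := split (endsZ_node c d true) (endsZ_node c' d' false) heq
        exact absurd h1.symm (node_ne_node c' d' c d)
      | circ c' d' =>
        rw [Cc_circ_mul_sh, Cc_circ_mul_sh] at heq
        obtain ⟨h1, h2⟩ := split (endsZ_node c d true) (endsZ_node c' d' true) heq
        have h3 : Cc18 c * sh18 (Cc18 d) = Cc18 c' * sh18 (Cc18 d') :=
          mul_right_cancel h1
        obtain ⟨hc, hd⟩ := ih c c' (Cc18 d) (Cc18 d') (by simp [sz] at hle; omega) h3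
        have hd2 : d = d' := by
          refine (ih d d' 1 1 (by simp [sz] at hle; omega) ?_).1
          rw [hd]
        subst hc; subst hd2
        exact ⟨rfl, h2⟩

end Hlp18

/-- The blueprint map into the free group is injective: distinct terms have distinct
images. -/
theorem stmt18 : Function.Injective Cc18 := by
  intro t t' h
  refine (Hlp18.master (Hlp18.sz t + Hlp18.sz t') t t' 1 1 le_rfl ?_).1
  rw [map_one, mul_one, mul_one, h]
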